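/- For every n ≥ 1, the set A_n = {Σ_{i=1}^n a_i 2^{−i²} : a_i ∈ {1, …, 2^i}} ⊆ ℝ has cardinality |A_n| = 2^{n(n+1)/2}, any two distinct points of A_n are at distance ≥ 4^{−n²}, and |A_n + A_n| ≤ 2^n |A_n|, so that log|A_n+A_n| / log|A_n| → 1 as n → ∞. -/

import Mathlib

open Filter Pointwise

/-- `A_n = {Σ_{i=1}^n a_i 2^{−i²} : 1 ≤ a_i ≤ 2^i}`. -/
noncomputable def An (n : ℕ) : Finset ℝ :=
  Finset.image
    (fun a : (i : Fin n) → Fin (2 ^ ((i : ℕ) + 1)) =>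
      ∑ i : Fin n, (((a i : ℕ) + 1 : ℕ) : ℝ) * (2 : ℝ) ^ (-(((i : ℕ) + 1 : ℤ) ^ 2)))
    Finset.univ

section AuxAnGap
open Finset
noncomputable def fA (n : ℕ) (a : (i : Fin n) → Fin (2 ^ ((i : ℕ) + 1))) : ℝ :=
  ∑ i : Fin n, (((a i : ℕ) + 1 : ℕ) : ℝ) * (2 : ℝ) ^ (-(((i : ℕ) + 1 : ℤ) ^ 2))

noncomputable def w (i : ℕ) : ℝ := (2 : ℝ) ^ (-((i + 1 : ℤ)) ^ 2)

lemma w_pos (i : ℕ) : 0 < w i := by unfold w; positivity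

lemma geo (m n : ℕ) : ∑ k ∈ Finset.Ico m n, (1/2:ℝ)^k ≤ (1/2)^m * 2 := by
  rw [Finset.sum_Ico_eq_sum_range]
  calc ∑ k ∈ Finset.range (n - m), (1/2:ℝ)^(m + k)
      = (1/2)^m * ∑ k ∈ Finset.range (n - m), (1/2:ℝ)^k := by
        rw [Finset.mul_sum]; exact Finset.sum_congr rfl fun k _ => by rw [pow_add]
    _ ≤ (1/2)^m * 2 := by
        have := sum_geometric_two_le (n - m)
        nlinarith [pow_pos (by norm_num : (0:ℝ) < 1/2) m]

lemma fA_sub (n : ℕ) (a b : (i : Fin n) → Fin (2 ^ ((i : ℕ) + 1))) :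
    fA n b - fA n a = ∑ i : Fin n, (((b i : ℕ) : ℝ) - ((a i : ℕ) : ℝ)) * w i := by
  unfold fA w
  rw [← Finset.sum_sub_distrib]
  exact Finset.sum_congr rfl fun i _ => by push_cast; ring

lemma key {n : ℕ} (a b : (i : Fin n) → Fin (2 ^ ((i : ℕ) + 1))) (i₀ : Fin n)
    (hlt : (a i₀ : ℕ) < (b i₀ : ℕ)) (hmin : ∀ i, i < i₀ → a i = b i) :
    fA n a < fA n b := by
  have hsub := fA_sub n a b
  set g : Fin n → ℝ := fun i => (((b i : ℕ) : ℝ) - ((a i : ℕ) : ℝ)) * w i with hg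
  -- split
  have hsplit : ∑ i : Fin n, g i
      = ∑ i ∈ Finset.univ.filter (fun i => i₀ < i), g i
        + ∑ i ∈ Finset.univ.filter (fun i => ¬ i₀ < i), g i :=
    (Finset.sum_filter_add_sum_filter_not _ _ _).symm
  -- head part : ≥ w i₀
  have hgnn : ∀ i ∈ Finset.univ.filter (fun i : Fin n => ¬ i₀ < i), 0 ≤ g i := by
    intro i hi
    simp only [Finset.mem_filter, not_lt] at hi
    rcases lt_or_eq_of_le hi.2 with h | h
    · rw [hg]; simp [hmin i h]
    · subst h
      have : ((a i : ℕ) : ℝ) ≤ ((b i : ℕ) : ℝ) := by exact_mod_cast hlt.le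
      have := w_pos (i : ℕ)
      rw [hg]; dsimp only; nlinarith
  have hhead : w (i₀ : ℕ) ≤ ∑ i ∈ Finset.univ.filter (fun i => ¬ i₀ < i), g i := by
    have h1 : w (i₀ : ℕ) ≤ g i₀ := by
      have hd : (1:ℝ) ≤ ((b i₀ : ℕ) : ℝ) - ((a i₀ : ℕ) : ℝ) := by
        have : (a i₀ : ℕ) + 1 ≤ (b i₀ : ℕ) := hlt
        have := (Nat.cast_le (α := ℝ)).2 this
        push_cast at this; linarith
      have := w_pos (i₀ : ℕ)
      rw [hg]; dsimp only; nlinarith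
    exact h1.trans (Finset.single_le_sum hgnn (by simp))
  -- per-term tail bound
  set c : ℝ := w (i₀ : ℕ) * 2 ^ (i₀ : ℕ) with hc
  have hterm : ∀ i ∈ Finset.univ.filter (fun i : Fin n => i₀ < i),
      -(c * (1/2:ℝ) ^ (i : ℕ)) < g i := by
    intro i hi
    simp only [Finset.mem_filter] at hi
    have hii : (i₀ : ℕ) + 1 ≤ (i : ℕ) := hi.2
    have hb0 : (0:ℝ) ≤ ((b i : ℕ) : ℝ) := by positivity
    have ha' : ((a i : ℕ) : ℝ) ≤ 2 ^ ((i : ℕ) + 1) - 1 := by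
      have : (a i : ℕ) + 1 ≤ 2 ^ ((i : ℕ) + 1) := (a i).2
      have := (Nat.cast_le (α := ℝ)).2 this
      push_cast at this; linarith
    have hwi := w_pos (i : ℕ)
    -- 2^(i+1) * w i ≤ c * (1/2)^i
    have hcomp : (2:ℝ) ^ ((i : ℕ) + 1) * w (i : ℕ) ≤ c * (1/2:ℝ) ^ (i : ℕ) := by
      rw [hc, w, w]
      simp only [one_div, inv_pow, ← zpow_natCast (2:ℝ), ← zpow_neg,
        ← zpow_add₀ (by norm_num : (2:ℝ) ≠ 0)]
      apply zpow_le_zpow_right₀ (by norm_num)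
      have : ((i₀ : ℕ) : ℤ) + 1 ≤ ((i : ℕ) : ℤ) := by exact_mod_cast hii
      push_cast
      nlinarith
    have hxw : ((a i : ℕ) : ℝ) * w (i : ℕ) ≤ ((2:ℝ) ^ ((i : ℕ) + 1) - 1) * w (i : ℕ) :=
      mul_le_mul_of_nonneg_right ha' hwi.le
    have hyw : (0:ℝ) ≤ ((b i : ℕ) : ℝ) * w (i : ℕ) := mul_nonneg hb0 hwi.le
    rw [hg]; dsimp only
    nlinarith
  -- geometric sum bound on the tail
  have hgeo : ∑ i ∈ Finset.univ.filter (fun i : Fin n => i₀ < i), (1/2:ℝ) ^ (i : ℕ)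
      ≤ (1/2:ℝ) ^ (i₀ : ℕ) := by
    have himg : ∑ i ∈ Finset.univ.filter (fun i : Fin n => i₀ < i), (1/2:ℝ) ^ (i : ℕ)
        = ∑ k ∈ (Finset.univ.filter (fun i : Fin n => i₀ < i)).image (Fin.val),
            (1/2:ℝ) ^ k := by
      rw [Finset.sum_image (by intro x _ y _ h; exact Fin.val_injective h)]
    rw [himg]
    have hsub : (Finset.univ.filter (fun i : Fin n => i₀ < i)).image (Fin.val)
        ⊆ Finset.Ico ((i₀ : ℕ) + 1) n := by
      intro k hk
      simp only [Finset.mem_image, Finset.mem_filter] at hk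
      obtain ⟨x, hx, rfl⟩ := hk
      simp only [Finset.mem_Ico]
      exact ⟨hx.2, x.2⟩
    calc ∑ k ∈ (Finset.univ.filter (fun i : Fin n => i₀ < i)).image (Fin.val), (1/2:ℝ) ^ k
        ≤ ∑ k ∈ Finset.Ico ((i₀ : ℕ) + 1) n, (1/2:ℝ) ^ k :=
          Finset.sum_le_sum_of_subset_of_nonneg hsub (by intros; positivity)
      _ ≤ (1/2:ℝ) ^ ((i₀ : ℕ) + 1) * 2 := geo _ _
      _ = (1/2:ℝ) ^ (i₀ : ℕ) := by ring
  -- tail sum bound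
  have hcw : c * (1/2:ℝ) ^ (i₀ : ℕ) = w (i₀ : ℕ) := by
    rw [hc]; rw [one_div, inv_pow]; field_simp
  have hcpos : 0 < c := by
    have := w_pos (i₀ : ℕ); rw [hc]; positivity
  have htail : -(w (i₀ : ℕ)) < ∑ i ∈ Finset.univ.filter (fun i : Fin n => i₀ < i), g i := by
    rcases Finset.eq_empty_or_nonempty (Finset.univ.filter (fun i : Fin n => i₀ < i)) with he | hne
    · rw [he, Finset.sum_empty]
      have := w_pos (i₀ : ℕ); linarith
    · have h1 : ∑ i ∈ Finset.univ.filter (fun i : Fin n => i₀ < i), -(c * (1/2:ℝ) ^ (i : ℕ))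
          < ∑ i ∈ Finset.univ.filter (fun i : Fin n => i₀ < i), g i :=
        Finset.sum_lt_sum_of_nonempty hne hterm
      have h2 : ∑ i ∈ Finset.univ.filter (fun i : Fin n => i₀ < i), -(c * (1/2:ℝ) ^ (i : ℕ))
          = -(c * ∑ i ∈ Finset.univ.filter (fun i : Fin n => i₀ < i), (1/2:ℝ) ^ (i : ℕ)) := by
        rw [Finset.mul_sum, ← Finset.sum_neg_distrib]
      have h3 : c * ∑ i ∈ Finset.univ.filter (fun i : Fin n => i₀ < i), (1/2:ℝ) ^ (i : ℕ)
          ≤ w (i₀ : ℕ) := by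
        rw [← hcw]
        exact (mul_le_mul_iff_right₀ hcpos).2 hgeo
      linarith
  have : (0:ℝ) < fA n b - fA n a := by
    rw [hsub, hsplit]
    linarith
  linarith

lemma gauss (n : ℕ) : ∑ i ∈ Finset.range n, (i + 1) = n * (n + 1) / 2 := by
  induction n with
  | zero => simp
  | succ m ih =>
      rw [Finset.sum_range_succ, ih]
      have h2 : 2 ∣ m * (m + 1) := (Nat.even_mul_succ_self m).two_dvd
      have h2' : 2 ∣ (m + 1) * (m + 1 + 1) := (Nat.even_mul_succ_self (m+1)).two_dvd
      have hx : (m + 1) * (m + 1 + 1) = m * (m + 1) + 2 * (m + 1) := by ring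
      omega

lemma fA_inj {n : ℕ} : Function.Injective (fA n) := by
  intro a b hab
  by_contra hne
  have hD : (Finset.univ.filter (fun i : Fin n => a i ≠ b i)).Nonempty := by
    rw [Finset.filter_nonempty_iff]
    by_contra h
    push_neg at h
    exact hne (funext fun i => h i (Finset.mem_univ i))
  set i₀ := (Finset.univ.filter (fun i : Fin n => a i ≠ b i)).min' hD with hi₀
  have h₀ : a i₀ ≠ b i₀ := by
    have := (Finset.univ.filter (fun i : Fin n => a i ≠ b i)).min'_mem hD
    rw [Finset.mem_filter] at this; exact this.2
  have hmin : ∀ i, i < i₀ → a i = b i := by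
    intro i hi
    by_contra h
    have : i₀ ≤ i := Finset.min'_le _ _ (by rw [Finset.mem_filter]; exact ⟨Finset.mem_univ i, h⟩)
    exact absurd hi (not_lt.2 this)
  have hval : (a i₀ : ℕ) ≠ (b i₀ : ℕ) := fun h => h₀ (Fin.ext h)
  rcases hval.lt_or_gt with h | h
  · exact absurd hab (ne_of_lt (key a b i₀ h hmin))
  · exact absurd hab.symm (ne_of_lt (key b a i₀ h (fun i hi => (hmin i hi).symm)))

lemma An_card (n : ℕ) : (An n).card = 2 ^ (n * (n + 1) / 2) := by
  have : (An n).card = Fintype.card ((i : Fin n) → Fin (2 ^ ((i : ℕ) + 1))) := by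
    rw [An, show (fun a : (i : Fin n) → Fin (2 ^ ((i : ℕ) + 1)) =>
      ∑ i : Fin n, (((a i : ℕ) + 1 : ℕ) : ℝ) * (2 : ℝ) ^ (-(((i : ℕ) + 1 : ℤ) ^ 2))) = fA n from rfl,
      Finset.card_image_of_injective _ fA_inj, Finset.card_univ]
  rw [this, Fintype.card_pi]
  simp only [Fintype.card_fin]
  rw [Finset.prod_pow_eq_pow_sum]
  congr 1
  rw [Fin.sum_univ_eq_sum_range (fun i => i + 1) n]
  exact gauss n

noncomputable def NA (n : ℕ) (a : (i : Fin n) → Fin (2 ^ ((i : ℕ) + 1))) : ℕ :=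
  ∑ i : Fin n, ((a i : ℕ) + 1) * 2 ^ (n ^ 2 - ((i : ℕ) + 1) ^ 2)

lemma fA_mul (n : ℕ) (a : (i : Fin n) → Fin (2 ^ ((i : ℕ) + 1))) :
    fA n a * (2 : ℝ) ^ (n ^ 2) = (NA n a : ℝ) := by
  rw [fA, NA, Finset.sum_mul]
  push_cast
  apply Finset.sum_congr rfl
  intro i _
  have hle : ((i : ℕ) + 1) ^ 2 ≤ n ^ 2 := by
    have : (i : ℕ) + 1 ≤ n := i.2
    nlinarith
  have : (2:ℝ) ^ (n ^ 2 - ((i : ℕ) + 1) ^ 2) = 2 ^ (n ^ 2) / 2 ^ (((i : ℕ) + 1) ^ 2) := by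
    rw [eq_div_iff (by positivity), ← pow_add]
    congr 1
    omega
  rw [this]
  have hzp : (2:ℝ) ^ (-(((i : ℕ) + 1 : ℤ) ^ 2)) = ((2:ℝ) ^ ((((i : ℕ) + 1)) ^ 2 : ℕ))⁻¹ := by
    have he : (((i : ℕ) + 1 : ℤ)) ^ 2 = (((((i : ℕ) + 1)) ^ 2 : ℕ) : ℤ) := by push_cast; ring
    rw [zpow_neg, he, zpow_natCast]
  rw [hzp]
  field_simp

lemma An_sep {n : ℕ} {x y : ℝ} (hx : x ∈ An n) (hy : y ∈ An n) (hxy : x ≠ y) :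
    |x - y| ≥ (4 : ℝ) ^ (-((n : ℤ) ^ 2)) := by
  rw [An, Finset.mem_image] at hx hy
  obtain ⟨a, -, rfl⟩ := hx
  obtain ⟨b, -, rfl⟩ := hy
  change fA n a ≠ fA n b at hxy
  change |fA n a - fA n b| ≥ _
  have hNa := fA_mul n a
  have hNb := fA_mul n b
  have hne' : NA n a ≠ NA n b := by
    intro h
    apply hxy
    apply mul_right_cancel₀ (show ((2:ℝ) ^ (n ^ 2)) ≠ 0 by positivity)
    rw [hNa, hNb, h]
  have hz : ((NA n a : ℤ) - (NA n b : ℤ)) ≠ 0 := by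
    intro h
    apply hne'
    have := sub_eq_zero.mp h
    exact_mod_cast this
  have hzabs : (1:ℤ) ≤ |(NA n a : ℤ) - (NA n b : ℤ)| := Int.one_le_abs hz
  have h1 : (1:ℝ) ≤ |(NA n a : ℝ) - (NA n b : ℝ)| := by exact_mod_cast hzabs
  have hp : (0:ℝ) < (2:ℝ) ^ (n ^ 2) := by positivity
  have hkey : (1:ℝ) ≤ |fA n a - fA n b| * (2:ℝ) ^ (n ^ 2) := by
    rw [← abs_of_pos hp, ← abs_mul, sub_mul, hNa, hNb]
    exact h1
  have h2 : (4 : ℝ) ^ (-((n : ℤ) ^ 2)) ≤ ((2:ℝ) ^ (n ^ 2))⁻¹ := by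
    have e4 : (4 : ℝ) ^ (-((n : ℤ) ^ 2)) = ((4:ℝ) ^ (n ^ 2 : ℕ))⁻¹ := by
      have he : ((n : ℤ)) ^ 2 = ((n ^ 2 : ℕ) : ℤ) := by push_cast; ring
      rw [he, zpow_neg, zpow_natCast]
    rw [e4]
    have h24 : (2:ℝ) ^ (n ^ 2) ≤ (4:ℝ) ^ (n ^ 2) :=
      pow_le_pow_left₀ (by norm_num) (by norm_num) _
    have h4p : (0:ℝ) < (4:ℝ) ^ (n ^ 2) := by positivity
    rw [inv_le_inv₀ h4p hp]
    exact h24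
  have h3 : ((2:ℝ) ^ (n ^ 2))⁻¹ ≤ |fA n a - fA n b| := by
    rw [inv_le_iff_one_le_mul₀ hp]
    exact hkey
  exact h2.trans h3

noncomputable def gB (n : ℕ) (c : (i : Fin n) → Fin (2 ^ ((i : ℕ) + 2))) : ℝ :=
  ∑ i : Fin n, (((c i : ℕ) + 2 : ℕ) : ℝ) * (2 : ℝ) ^ (-(((i : ℕ) + 1 : ℤ) ^ 2))

lemma add_subset (n : ℕ) : An n + An n ⊆ Finset.image (gB n) Finset.univ := by
  intro x hx
  rw [Finset.mem_add] at hx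
  obtain ⟨y, hy, z, hz, rfl⟩ := hx
  rw [An, Finset.mem_image] at hy hz
  obtain ⟨a, -, rfl⟩ := hy
  obtain ⟨b, -, rfl⟩ := hz
  rw [Finset.mem_image]
  refine ⟨fun i => ⟨(a i : ℕ) + (b i : ℕ), ?_⟩, Finset.mem_univ _, ?_⟩
  · have ha := (a i).2
    have hb := (b i).2
    have : (2:ℕ) ^ ((i : ℕ) + 2) = 2 ^ ((i : ℕ) + 1) + 2 ^ ((i : ℕ) + 1) := by ring
    omega
  · rw [gB, ← Finset.sum_add_distrib]
    apply Finset.sum_congr rfl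
    intro i _
    push_cast
    ring

lemma An_add_card (n : ℕ) : (An n + An n).card ≤ 2 ^ (n + n * (n + 1) / 2) := by
  calc (An n + An n).card ≤ (Finset.image (gB n) Finset.univ).card :=
        Finset.card_le_card (add_subset n)
    _ ≤ (Finset.univ : Finset ((i : Fin n) → Fin (2 ^ ((i : ℕ) + 2)))).card :=
        Finset.card_image_le
    _ = 2 ^ (n + n * (n + 1) / 2) := by
        rw [Finset.card_univ, Fintype.card_pi]
        simp only [Fintype.card_fin]
        rw [Finset.prod_pow_eq_pow_sum]
        congr 1
        rw [Fin.sum_univ_eq_sum_range (fun i => i + 2) n]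
        have : ∀ m : ℕ, ∑ i ∈ Finset.range m, (i + 2) = ∑ i ∈ Finset.range m, (i + 1) + m := by
          intro m
          induction m with
          | zero => simp
          | succ k ih => rw [Finset.sum_range_succ, Finset.sum_range_succ, ih]; ring
        rw [this n, gauss n]
        omega


end AuxAnGap

/-- `|A_n| = 2^{n(n+1)/2}`, distinct points of `A_n` are `4^{−n²}`-separated,
`|A_n + A_n| ≤ 2ⁿ |A_n|`, and hence `log|A_n+A_n|/log|A_n| → 1`. -/
theorem An_gap_example :
    (∀ n : ℕ, 1 ≤ n → (An n).card = 2 ^ (n * (n + 1) / 2)) ∧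
    (∀ n : ℕ, 1 ≤ n → ∀ x ∈ An n, ∀ y ∈ An n, x ≠ y →
      |x - y| ≥ (4 : ℝ) ^ (-((n : ℤ) ^ 2))) ∧
    (∀ n : ℕ, 1 ≤ n → ((An n + An n).card : ℝ) ≤ 2 ^ n * (An n).card) ∧
    Tendsto (fun n : ℕ =>
        Real.log ((An n + An n).card) / Real.log ((An n).card))
      atTop (nhds 1) := by
  have hdouble : ∀ n : ℕ, (An n + An n).card ≤ 2 ^ n * (An n).card := by
    intro n
    calc (An n + An n).card ≤ 2 ^ (n + n * (n + 1) / 2) := An_add_card n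
      _ = 2 ^ n * (An n).card := by rw [An_card, pow_add]
  refine ⟨fun n _ => An_card n, fun n _ x hx y hy hxy => An_sep hx hy hxy,
    fun n _ => ?_, ?_⟩
  · exact_mod_cast hdouble n
  · -- the limit
    have hAne : ∀ n : ℕ, (An n).Nonempty := by
      intro n
      rw [An]
      exact Finset.image_nonempty.2 Finset.univ_nonempty
    apply tendsto_of_tendsto_of_tendsto_of_le_of_le'
      (g := fun _ : ℕ => (1:ℝ)) (h := fun n : ℕ => 1 + 2 / (n:ℝ))
    · exact tendsto_const_nhds
    · have : Tendsto (fun n : ℕ => 2 / (n:ℝ)) atTop (nhds 0) :=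
        tendsto_const_div_atTop_nhds_zero_nat 2
      simpa using tendsto_const_nhds.add this
    · -- 1 ≤ ratio, eventually
      filter_upwards [eventually_ge_atTop 1] with n hn
      set k := n * (n + 1) / 2 with hk
      have hk1 : 1 ≤ k := by
        rw [hk]
        have : n * (n + 1) ≥ 2 := by nlinarith
        omega
      have hA : ((An n).card : ℝ) = 2 ^ k := by rw [An_card]; push_cast; ring
      have hlogA : Real.log ((An n).card) = k * Real.log 2 := by
        rw [hA, Real.log_pow]
      have hlogApos : 0 < Real.log ((An n).card) := by
        rw [hlogA]
        have := Real.log_pos (by norm_num : (1:ℝ) < 2)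
        positivity
      have hSA : ((An n).card : ℝ) ≤ ((An n + An n).card : ℝ) := by
        exact_mod_cast Finset.card_le_card_add_right (hAne n)
      have hlogS : Real.log ((An n).card) ≤ Real.log ((An n + An n).card) :=
        Real.log_le_log (by positivity) hSA
      rw [le_div_iff₀ hlogApos]
      linarith
    · -- ratio ≤ 1 + 2/n, eventually
      filter_upwards [eventually_ge_atTop 1] with n hn
      set k := n * (n + 1) / 2 with hk
      have hk2 : 2 * k = n * (n + 1) := by
        have : 2 ∣ n * (n + 1) := (Nat.even_mul_succ_self n).two_dvd
        omega
      have hk1 : 1 ≤ k := by nlinarith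
      have hA : ((An n).card : ℝ) = 2 ^ k := by rw [An_card]; push_cast; ring
      have hlogA : Real.log ((An n).card) = k * Real.log 2 := by
        rw [hA, Real.log_pow]
      have hl2 := Real.log_pos (by norm_num : (1:ℝ) < 2)
      have hkR : (0:ℝ) < (k:ℝ) := by exact_mod_cast hk1
      have hlogApos : 0 < Real.log ((An n).card) := by rw [hlogA]; positivity
      have hS : ((An n + An n).card : ℝ) ≤ 2 ^ (n + k) := by
        exact_mod_cast An_add_card n
      have hSpos : (0:ℝ) < ((An n + An n).card : ℝ) := by
        have := (hAne n).card_pos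
        have h2 : 0 < (An n + An n).card :=
          Finset.card_pos.2 ((hAne n).add (hAne n))
        exact_mod_cast h2
      have hlogS : Real.log ((An n + An n).card) ≤ ((n:ℝ) + k) * Real.log 2 := by
        have h := Real.log_le_log hSpos hS
        rw [Real.log_pow] at h
        push_cast at h
        linarith
      rw [div_le_iff₀ hlogApos, hlogA]
      have hnR : (0:ℝ) < (n:ℝ) := by exact_mod_cast hn
      have hfinal : ((n:ℝ) + k) ≤ (1 + 2 / n) * k := by
        have h2k : (2:ℝ) * k = n * (n + 1) := by exact_mod_cast hk2
        have hnd : (n:ℝ) ≤ 2 * k / n := by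
          rw [le_div_iff₀ hnR]; nlinarith
        rw [add_mul, one_mul, div_mul_eq_mul_div]
        linarith
      calc Real.log ((An n + An n).card) ≤ ((n:ℝ) + k) * Real.log 2 := hlogS
        _ ≤ ((1 + 2 / n) * k) * Real.log 2 := by nlinarith
        _ = (1 + 2 / n) * (k * Real.log 2) := by ring
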